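/- A point w ≥ 0 satisfies that {w} is a reaction set (i.e., w is strongly bilevel feasible) if and only if (w, g(w)) is an extreme point of epi(g), if and only if dim T(w) = n. -/

import Mathlib

set_option maxHeartbeats 1000000

open Set Filter

section Aux
variable {E : Type*} [NormedAddCommGroup E] [NormedSpace ℝ E] [FiniteDimensional ℝ E]

/-- An extreme point of a polyhedron is the unique minimizer of some linear functional. -/
lemma aux_extreme_unique_min {m : ℕ} (L : Fin m → E →ₗ[ℝ] ℝ) (b : Fin m → ℝ)
    {P : Set E} (hP : P = {z | ∀ i, L i z ≤ b i}) {x : E}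
    (hx : x ∈ Set.extremePoints ℝ P) :
    ∃ M : E →ₗ[ℝ] ℝ, (∀ z ∈ P, M x ≤ M z) ∧ (∀ z ∈ P, M z = M x → z = x) := by
  classical
  rw [mem_extremePoints] at hx
  have hxP : x ∈ P := hx.1
  have hxle : ∀ i, L i x ≤ b i := by rw [hP] at hxP; exact hxP
  set I : Finset (Fin m) := Finset.univ.filter (fun i => L i x = b i) with hI
  refine ⟨-(∑ i ∈ I, L i), ?_, ?_⟩
  · intro z hz
    rw [hP] at hz
    simp only [LinearMap.neg_apply, LinearMap.coe_sum, Finset.sum_apply, neg_le_neg_iff]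
    exact Finset.sum_le_sum fun i hi => by
      have : L i x = b i := (Finset.mem_filter.mp hi).2
      rw [this]; exact hz i
  · intro z hzP hMz
    have hzle : ∀ i, L i z ≤ b i := by rw [hP] at hzP; exact hzP
    -- all tight constraints at x are tight at z
    have htight : ∀ i ∈ I, L i z = b i := by
      by_contra hcon
      push_neg at hcon
      obtain ⟨j, hjI, hj⟩ := hcon
      have hlt : ∑ i ∈ I, L i z < ∑ i ∈ I, L i x := by
        apply Finset.sum_lt_sum
        · intro i hi
          rw [(Finset.mem_filter.mp hi).2]; exact hzle i
        · exact ⟨j, hjI, by rw [(Finset.mem_filter.mp hjI).2]; exact lt_of_le_of_ne (hzle j) hj⟩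
      simp only [LinearMap.neg_apply, LinearMap.coe_sum, Finset.sum_apply, neg_inj] at hMz
      linarith
    -- find t > 0 with x + t • (x - z) ∈ P
    have hev : ∀ᶠ t : ℝ in nhdsWithin 0 (Set.Ioi 0),
        ∀ i, L i (x + t • (x - z)) ≤ b i := by
      rw [eventually_all]
      intro i
      by_cases hi : i ∈ I
      · filter_upwards [self_mem_nhdsWithin] with t _ht
        have hLx : L i x = b i := (Finset.mem_filter.mp hi).2
        have hLz : L i z = b i := htight i hi
        simp [map_add, map_smul, map_sub, hLx, hLz, smul_eq_mul]
      · have hlt : L i x < b i := lt_of_le_of_ne (hxle i)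
          (by simpa [hI] using hi)
        have hcont : Tendsto (fun t : ℝ => L i (x + t • (x - z)))
            (nhdsWithin 0 (Set.Ioi 0)) (nhds (L i x)) := by
          have : Continuous (fun t : ℝ => L i (x + t • (x - z))) := by
            have := (L i).continuous_of_finiteDimensional
            continuity
          have h0 : (fun t : ℝ => L i (x + t • (x - z))) 0 = L i x := by simp
          simpa [h0] using (this.tendsto 0).mono_left nhdsWithin_le_nhds
        filter_upwards [hcont.eventually_le_const hlt] with t ht using ht
    obtain ⟨t, hmem, ht⟩ := (hev.and self_mem_nhdsWithin).exists
    have ht0 : (0:ℝ) < t := ht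
    have hyP : x + t • (x - z) ∈ P := by rw [hP]; exact hmem
    -- x is in the open segment between y and z
    have hseg : x ∈ openSegment ℝ (x + t • (x - z)) z := by
      have h1t : (0:ℝ) < 1 + t := by linarith
      refine ⟨1/(1+t), t/(1+t), by positivity, by positivity, by field_simp, ?_⟩
      have hmod : ((1:ℝ)/(1+t)) • (x + t • (x - z)) + (t/(1+t)) • z =
          (((1:ℝ)/(1+t)) * (1 + t)) • x + (t/(1+t) - ((1:ℝ)/(1+t)) * t) • z := by
        module
      have c1 : ((1:ℝ)/(1+t)) * (1 + t) = 1 := by field_simp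
      have c2 : t/(1+t) - ((1:ℝ)/(1+t)) * t = 0 := by field_simp; ring
      rw [hmod, c1, c2, one_smul, zero_smul, add_zero]
    exact (hx.2 _ hyP _ hzP hseg).2

/-- Linear growth away from the unique minimizer over a polyhedron. -/
lemma aux_growth {m : ℕ} (L : Fin m → E →ₗ[ℝ] ℝ) (b : Fin m → ℝ)
    {P : Set E} (hP : P = {z | ∀ i, L i z ≤ b i}) {x : E} (hxP : x ∈ P)
    (M : E →ₗ[ℝ] ℝ) (hmin : ∀ z ∈ P, M x ≤ M z) (huniq : ∀ z ∈ P, M z = M x → z = x) :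
    ∃ ε > 0, ∀ z ∈ P, ε * ‖z - x‖ ≤ M z - M x := by
  classical
  have hxle : ∀ i, L i x ≤ b i := by rw [hP] at hxP; exact hxP
  -- radius ρ such that near x, only the tight constraints matter
  have hev : ∀ᶠ y in nhds x, ∀ i, L i x < b i → L i y ≤ b i := by
    rw [eventually_all]
    intro i
    by_cases hi : L i x < b i
    · have hcont : Tendsto (L i) (nhds x) (nhds (L i x)) :=
        ((L i).continuous_of_finiteDimensional.tendsto x)
      filter_upwards [hcont.eventually_le_const hi] with y hy _ using hy
    · filter_upwards with y hy; exact absurd hy hi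
  obtain ⟨ρ, hρ0, hρ⟩ := Metric.eventually_nhds_iff_ball.mp hev
  -- cone property
  have hcone : ∀ z ∈ P, z ≠ x → x + (ρ/2/‖z - x‖) • (z - x) ∈ P := by
    intro z hzP hzx
    have hzle : ∀ i, L i z ≤ b i := by rw [hP] at hzP; exact hzP
    have hr : (0:ℝ) < ‖z - x‖ := by
      simpa [norm_pos_iff, sub_eq_zero] using hzx
    set t : ℝ := ρ/2/‖z - x‖ with hts
    have ht0 : 0 < t := by positivity
    rcases le_or_gt t 1 with htle | htgt
    · -- convex combination
      rw [hP]
      intro i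
      have : L i (x + t • (z - x)) = L i x + t * (L i z - L i x) := by
        simp [map_add, map_smul, map_sub, smul_eq_mul]
      rw [this]
      nlinarith [hxle i, hzle i]
    · -- within the ball of radius ρ: use tightness-splitting
      have hnorm : ‖(x + t • (z - x)) - x‖ = ρ/2 := by
        rw [add_sub_cancel_left, norm_smul, Real.norm_eq_abs, abs_of_pos ht0, hts]
        field_simp
        try ring
      have hball : x + t • (z - x) ∈ Metric.ball x ρ := by
        rw [Metric.mem_ball, dist_eq_norm, hnorm]; linarith
      rw [hP]
      intro i
      rcases lt_or_ge (L i x) (b i) with hlt | hge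
      · exact hρ _ hball i hlt
      · have heq : L i x = b i := le_antisymm (hxle i) hge
        have : L i (x + t • (z - x)) = b i + t * (L i z - b i) := by
          simp [map_add, map_smul, map_sub, smul_eq_mul, heq]
        rw [this]
        nlinarith [hzle i]
  -- the sphere slice
  set K : Set E := P ∩ Metric.sphere x (ρ/2) with hK
  have hPclosed : IsClosed P := by
    rw [hP]
    have : {z : E | ∀ i, L i z ≤ b i} = ⋂ i, {z | L i z ≤ b i} := by
      ext z; simp
    rw [this]
    exact isClosed_iInter fun i =>
      isClosed_le (L i).continuous_of_finiteDimensional continuous_const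
  have hKcompact : IsCompact K := by
    apply Metric.isCompact_of_isClosed_isBounded
    · exact hPclosed.inter (Metric.isClosed_sphere)
    · exact (Metric.isBounded_sphere).subset (Set.inter_subset_right)
  rcases eq_empty_or_nonempty K with hKe | hKne
  · -- P = {x}
    refine ⟨1, one_pos, fun z hz => ?_⟩
    rcases eq_or_ne z x with rfl | hne
    · simp
    · exfalso
      have := hcone z hz hne
      have hmem : x + (ρ/2/‖z - x‖) • (z - x) ∈ K := by
        refine ⟨this, ?_⟩
        have hr : (0:ℝ) < ‖z - x‖ := by simpa [norm_pos_iff, sub_eq_zero] using hne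
        simp only [Metric.mem_sphere, dist_eq_norm, add_sub_cancel_left, norm_smul,
          Real.norm_eq_abs]
        rw [abs_of_pos (by positivity)]
        field_simp
        try ring
      rw [hKe] at hmem; exact hmem
  · obtain ⟨z₀, hz₀K, hz₀min⟩ := hKcompact.exists_isMinOn hKne
      (M.continuous_of_finiteDimensional.continuousOn)
    have hz₀ne : z₀ ≠ x := by
      intro h
      have := hz₀K.2
      rw [h] at this
      simp [Metric.mem_sphere] at this
      linarith
    have hδ : 0 < M z₀ - M x := by
      rcases lt_or_eq_of_le (hmin z₀ hz₀K.1) with h | h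
      · linarith
      · exact absurd (huniq z₀ hz₀K.1 h.symm) hz₀ne
    refine ⟨(M z₀ - M x) / (ρ/2), by positivity, fun z hz => ?_⟩
    rcases eq_or_ne z x with rfl | hne
    · simp
    · have hr : (0:ℝ) < ‖z - x‖ := by simpa [norm_pos_iff, sub_eq_zero] using hne
      set y := x + (ρ/2/‖z - x‖) • (z - x) with hy
      have hyP : y ∈ P := hcone z hz hne
      have hyK : y ∈ K := by
        refine ⟨hyP, ?_⟩
        simp only [hy, Metric.mem_sphere, dist_eq_norm, add_sub_cancel_left, norm_smul,
          Real.norm_eq_abs]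
        rw [abs_of_pos (by positivity)]
        field_simp
        try ring
      have hMy : M z₀ ≤ M y := hz₀min hyK
      have hMyval : M y = M x + (ρ/2/‖z - x‖) * (M z - M x) := by
        simp [hy, map_add, map_smul, map_sub, smul_eq_mul]; try ring
      rw [hMyval] at hMy
      rw [div_mul_eq_mul_div, div_le_iff₀ (by positivity : (0:ℝ) < ρ/2)]
      have h2 : (ρ/2/‖z - x‖) * (M z - M x) ≥ M z₀ - M x := by linarith
      calc (M z₀ - M x) * ‖z - x‖ ≤ ((ρ/2/‖z - x‖) * (M z - M x)) * ‖z - x‖ := by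
            nlinarith
        _ = (M z - M x) * (ρ/2) := by field_simp; try ring
  
end Aux

noncomputable section
open Set

abbrev V (n : ℕ) := EuclideanSpace ℝ (Fin n)

/-- A polyhedron: finite intersection of closed half-spaces. -/
def IsPolyhedron {E : Type*} [AddCommGroup E] [Module ℝ E] (P : Set E) : Prop :=
  ∃ (m : ℕ) (L : Fin m → E →ₗ[ℝ] ℝ) (b : Fin m → ℝ), P = {x | ∀ i, L i x ≤ b i}

/-- Epigraph of a real-valued function. -/
def epi {n : ℕ} (g : V n → ℝ) : Set (V n × ℝ) := {p | g p.1 ≤ p.2}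

/-- `F` is a non-vertical face of `P`: an exposed face, nonempty, whose affine hull
does not contain the vertical direction `(0, 1)`. -/
def NonVerticalFace {n : ℕ} (P F : Set (V n × ℝ)) : Prop :=
  IsExposed ℝ P F ∧ F.Nonempty ∧
    ((0 : V n), (1 : ℝ)) ∉ (affineSpan ℝ F).direction

theorem stmt9 (n : ℕ) (g : V n → ℝ)
    (hpoly : IsPolyhedron (epi g)) (hconv : ConvexOn ℝ univ g)
    (f : V n → EReal)
    (hf : ∀ t, f t = ⨅ w : V n, (((inner ℝ t w : ℝ) + g w : ℝ) : EReal))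
    (Tw : V n → Set (V n))
    (hT : ∀ w, Tw w = {t | f t = (((inner ℝ t w : ℝ) + g w : ℝ) : EReal)})
    (w : V n) (hw : ∀ i, 0 ≤ w i) :
    ((∃ F : Set (V n × ℝ), NonVerticalFace (epi g) F ∧ {w} = Prod.fst '' F) ↔
      (w, g w) ∈ Set.extremePoints ℝ (epi g)) ∧
    ((w, g w) ∈ Set.extremePoints ℝ (epi g) ↔
      Module.finrank ℝ (affineSpan ℝ (Tw w)).direction = n) := by
  classical
  obtain ⟨m, L, b, hPb⟩ := hpoly
  have hgx : ((w, g w) : V n × ℝ) ∈ epi g := by simp [epi]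
  -- characterization of membership in T(w)
  have key1 : ∀ t : V n, t ∈ Tw w ↔
      ∀ v : V n, (inner ℝ t w : ℝ) + g w ≤ (inner ℝ t v : ℝ) + g v := by
    intro t
    rw [hT w, mem_setOf_eq, hf t]
    constructor
    · intro h v
      have h1 : (⨅ v : V n, (((inner ℝ t v : ℝ) + g v : ℝ) : EReal)) ≤
          (((inner ℝ t v : ℝ) + g v : ℝ) : EReal) := iInf_le _ v
      rw [h] at h1
      exact_mod_cast h1
    · intro h
      refine le_antisymm (iInf_le _ w) (le_iInf fun v => ?_)
      exact_mod_cast h v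
  -- a ball inside T(w) forces extremality
  have key2 : ∀ (t₀ : V n) (ε : ℝ), 0 < ε → Metric.ball t₀ ε ⊆ Tw w →
      (w, g w) ∈ Set.extremePoints ℝ (epi g) := by
    intro t₀ ε hε hsub
    rw [mem_extremePoints]
    refine ⟨hgx, ?_⟩
    intro p hp q hq hseg
    obtain ⟨a, b', ha, hb', hab, hsum⟩ := hseg
    have hw1 : a • p.1 + b' • q.1 = w := by
      have := congrArg Prod.fst hsum; simpa using this
    have hw2 : a * p.2 + b' * q.2 = g w := by
      have := congrArg Prod.snd hsum; simpa [smul_eq_mul] using this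
    have hkey : ∀ t ∈ Metric.ball t₀ ε,
        (inner ℝ t p.1 : ℝ) + p.2 = (inner ℝ t w : ℝ) + g w ∧
        (inner ℝ t q.1 : ℝ) + q.2 = (inner ℝ t w : ℝ) + g w := by
      intro t ht
      have h1 := (key1 t).mp (hsub ht) p.1
      have h2 := (key1 t).mp (hsub ht) q.1
      have hp2 : g p.1 ≤ p.2 := hp
      have hq2 : g q.1 ≤ q.2 := hq
      have hiw : (inner ℝ t w : ℝ) = a * (inner ℝ t p.1 : ℝ) + b' * (inner ℝ t q.1 : ℝ) := by
        rw [← hw1, inner_add_right, real_inner_smul_right, real_inner_smul_right]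
      have hA : (inner ℝ t w : ℝ) + g w ≤ (inner ℝ t p.1 : ℝ) + p.2 := by linarith
      have hB : (inner ℝ t w : ℝ) + g w ≤ (inner ℝ t q.1 : ℝ) + q.2 := by linarith
      have hcomb : a * ((inner ℝ t p.1 : ℝ) + p.2) + b' * ((inner ℝ t q.1 : ℝ) + q.2)
          = (inner ℝ t w : ℝ) + g w := by rw [hiw, ← hw2]; ring
      have hZ : a * (((inner ℝ t p.1 : ℝ) + p.2) - ((inner ℝ t w : ℝ) + g w))
          + b' * (((inner ℝ t q.1 : ℝ) + q.2) - ((inner ℝ t w : ℝ) + g w)) = 0 := by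
        linear_combination hcomb - ((inner ℝ t w : ℝ) + g w) * hab
      have hZ1 : 0 ≤ a * (((inner ℝ t p.1 : ℝ) + p.2) - ((inner ℝ t w : ℝ) + g w)) :=
        mul_nonneg ha.le (sub_nonneg.mpr hA)
      have hZ2 : 0 ≤ b' * (((inner ℝ t q.1 : ℝ) + q.2) - ((inner ℝ t w : ℝ) + g w)) :=
        mul_nonneg hb'.le (sub_nonneg.mpr hB)
      have hE1 : a * (((inner ℝ t p.1 : ℝ) + p.2) - ((inner ℝ t w : ℝ) + g w)) = 0 := by linarith
      have hE2 : b' * (((inner ℝ t q.1 : ℝ) + q.2) - ((inner ℝ t w : ℝ) + g w)) = 0 := by linarith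
      constructor
      · rcases mul_eq_zero.mp hE1 with h | h
        · exact absurd h (ne_of_gt ha)
        · linarith
      · rcases mul_eq_zero.mp hE2 with h | h
        · exact absurd h (ne_of_gt hb')
        · linarith
    have hfix : ∀ r : V n × ℝ, r ∈ epi g →
        (∀ t ∈ Metric.ball t₀ ε, (inner ℝ t r.1 : ℝ) + r.2 = (inner ℝ t w : ℝ) + g w) →
        r = (w, g w) := by
      intro r hr hconst
      set d : V n := r.1 - w with hd
      have hdz : d = 0 := by
        by_contra hne
        have hdn : 0 < ‖d‖ := norm_pos_iff.mpr hne
        set s : ℝ := ε / (2 * (‖d‖ + 1)) with hs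
        have hspos : 0 < s := by positivity
        have hmem : t₀ + s • d ∈ Metric.ball t₀ ε := by
          rw [Metric.mem_ball, dist_eq_norm, add_sub_cancel_left, norm_smul,
            Real.norm_eq_abs, abs_of_pos hspos, hs]
          rw [div_mul_eq_mul_div, div_lt_iff₀ (by positivity)]
          nlinarith
        have e0 := hconst t₀ (Metric.mem_ball_self hε)
        have e1 := hconst _ hmem
        have l1 : (inner ℝ (t₀ + s • d) r.1 : ℝ) = inner ℝ t₀ r.1 + s * inner ℝ d r.1 := by
          rw [inner_add_left, real_inner_smul_left]
        have l2 : (inner ℝ (t₀ + s • d) w : ℝ) = inner ℝ t₀ w + s * inner ℝ d w := by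
          rw [inner_add_left, real_inner_smul_left]
        have h2 : s * ((inner ℝ d r.1 : ℝ) - (inner ℝ d w : ℝ)) = 0 := by
          rw [l1, l2] at e1; linarith
        have h3 : (inner ℝ d d : ℝ) = 0 := by
          have hsub' : (inner ℝ d d : ℝ) = (inner ℝ d r.1 : ℝ) - (inner ℝ d w : ℝ) := by
            rw [hd, inner_sub_right]
          rw [hsub']
          rcases mul_eq_zero.mp h2 with h | h
          · exact absurd h (ne_of_gt hspos)
          · exact h
        exact hne (inner_self_eq_zero.mp h3)
      have hr1 : r.1 = w := by rwa [hd, sub_eq_zero] at hdz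
      have e0 := hconst t₀ (Metric.mem_ball_self hε)
      rw [hr1] at e0
      have hr2 : r.2 = g w := by linarith
      exact Prod.ext hr1 hr2
    exact ⟨hfix p hp (fun t ht => (hkey t ht).1), hfix q hq (fun t ht => (hkey t ht).2)⟩
  -- extremality gives a ball inside T(w)
  have key3 : (w, g w) ∈ Set.extremePoints ℝ (epi g) →
      ∃ (t₀ : V n) (ε : ℝ), 0 < ε ∧ Metric.ball t₀ ε ⊆ Tw w := by
    intro hx
    obtain ⟨M, hmin, huniq⟩ := aux_extreme_unique_min L b hPb hx
    obtain ⟨ε, hε, hgrow⟩ := aux_growth L b hPb hgx M hmin huniq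
    set c : ℝ := M ((0 : V n), (1 : ℝ)) with hc
    have hcge : ε ≤ c := by
      have h1 : ((w, g w + 1) : V n × ℝ) ∈ epi g := by simp [epi]
      have h2 := hgrow _ h1
      have hsubm : ((w, g w + 1) : V n × ℝ) - (w, g w) = ((0 : V n), (1 : ℝ)) := by
        simp [Prod.ext_iff]
      have hn1 : ‖(((0 : V n), (1 : ℝ)) : V n × ℝ)‖ = 1 := by simp [Prod.norm_def]
      have hMv : M ((w, g w + 1) : V n × ℝ) - M ((w, g w) : V n × ℝ) = c := by
        rw [← map_sub, hsubm]
      rw [show ((w, g w + 1) : V n × ℝ) - (w, g w) = ((0 : V n), (1 : ℝ)) from hsubm,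
        hn1, mul_one] at h2
      linarith
    have hcpos : 0 < c := lt_of_lt_of_le hε hcge
    have hMsplit : ∀ (v : V n) (s : ℝ), M ((v, s) : V n × ℝ) = M ((v, 0) : V n × ℝ) + s * c := by
      intro v s
      have hdecomp : ((v, s) : V n × ℝ) = (v, 0) + s • (((0 : V n), (1 : ℝ)) : V n × ℝ) := by
        simp [Prod.ext_iff]
      rw [hdecomp, map_add, map_smul, smul_eq_mul, hc]
    set φ : (V n) →L[ℝ] ℝ :=
      LinearMap.toContinuousLinearMap (c⁻¹ • (M.comp (LinearMap.inl ℝ (V n) ℝ))) with hφ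
    set t₀ : V n := (InnerProductSpace.toDual ℝ (V n)).symm φ with ht₀
    have hinner : ∀ v : V n, (inner ℝ t₀ v : ℝ) = c⁻¹ * M ((v, 0) : V n × ℝ) := by
      intro v
      rw [ht₀, InnerProductSpace.toDual_symm_apply]
      simp [hφ]
    refine ⟨t₀, ε / c, by positivity, fun t ht => ?_⟩
    rw [key1]
    intro v
    have hgr := hgrow (v, g v) (by simp [epi] : ((v, g v) : V n × ℝ) ∈ epi g)
    have hnf : ‖v - w‖ ≤ ‖((v, g v) : V n × ℝ) - (w, g w)‖ := by
      have := norm_fst_le (((v, g v) : V n × ℝ) - (w, g w))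
      simpa using this
    have hMdiff : M ((v, g v) : V n × ℝ) - M ((w, g w) : V n × ℝ)
        = M ((v - w, 0) : V n × ℝ) + (g v - g w) * c := by
      rw [← map_sub]
      have : ((v, g v) : V n × ℝ) - (w, g w) = ((v - w : V n), g v - g w) := by
        simp [Prod.ext_iff]
      rw [this, hMsplit]
    have hM0 : M ((v - w, 0) : V n × ℝ) = c * (inner ℝ t₀ (v - w) : ℝ) := by
      rw [hinner]
      field_simp
    have hstep : (ε / c) * ‖v - w‖ ≤ (inner ℝ t₀ (v - w) : ℝ) + (g v - g w) := by
      have h5 : ε * ‖v - w‖ ≤ c * ((inner ℝ t₀ (v - w) : ℝ) + (g v - g w)) := by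
        calc ε * ‖v - w‖ ≤ ε * ‖((v, g v) : V n × ℝ) - (w, g w)‖ :=
              mul_le_mul_of_nonneg_left hnf hε.le
          _ ≤ M ((v, g v) : V n × ℝ) - M ((w, g w) : V n × ℝ) := hgr
          _ = c * ((inner ℝ t₀ (v - w) : ℝ) + (g v - g w)) := by
              rw [hMdiff, hM0]; ring
      rw [div_mul_eq_mul_div, div_le_iff₀ hcpos]
      linarith [h5]
    set u : V n := t - t₀ with hu
    have hun : ‖u‖ < ε / c := by
      rw [hu, ← dist_eq_norm]
      exact Metric.mem_ball.mp ht
    have hcs : -(‖u‖ * ‖v - w‖) ≤ (inner ℝ u (v - w) : ℝ) :=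
      neg_le_of_neg_le (by
        have := abs_real_inner_le_norm u (v - w)
        have h := neg_abs_le (inner ℝ u (v - w) : ℝ)
        linarith)
    have htv : (inner ℝ t (v - w) : ℝ) = (inner ℝ t₀ (v - w) : ℝ) + (inner ℝ u (v - w) : ℝ) := by
      have : t = t₀ + u := by rw [hu]; abel
      rw [this, inner_add_left]
    have hfin : 0 ≤ (inner ℝ t (v - w) : ℝ) + (g v - g w) := by
      have hnn : (0:ℝ) ≤ ‖v - w‖ := norm_nonneg _
      nlinarith [mul_le_mul_of_nonneg_right hun.le hnn]
    have hsplit : (inner ℝ t (v - w) : ℝ) = (inner ℝ t v : ℝ) - (inner ℝ t w : ℝ) :=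
      inner_sub_right t v w
    linarith
  -- full-dimensionality of T(w) from a ball
  have span_of_ball : ∀ (t₀ : V n) (ε : ℝ), 0 < ε → Metric.ball t₀ ε ⊆ Tw w →
      Module.finrank ℝ (affineSpan ℝ (Tw w)).direction = n := by
    intro t₀ ε hε hsub
    have h1 : affineSpan ℝ (Metric.ball t₀ ε) = ⊤ :=
      Metric.isOpen_ball.affineSpan_eq_top (Metric.nonempty_ball.mpr hε)
    have h2 : affineSpan ℝ (Tw w) = ⊤ :=
      top_unique (h1 ▸ affineSpan_mono ℝ hsub)
    rw [h2, AffineSubspace.direction_top, finrank_top, finrank_euclideanSpace_fin]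
  -- a ball from full-dimensionality
  have ball_of_finrank : Module.finrank ℝ (affineSpan ℝ (Tw w)).direction = n →
      ∃ (t₀ : V n) (ε : ℝ), 0 < ε ∧ Metric.ball t₀ ε ⊆ Tw w := by
    intro hfr
    rcases Nat.eq_zero_or_pos n with hn | hn
    · subst hn
      refine ⟨0, 1, one_pos, fun t _ => ?_⟩
      rw [key1 t]
      intro v
      rw [Subsingleton.elim v w]
    · have hTne : (Tw w).Nonempty := by
        by_contra hco
        rw [not_nonempty_iff_eq_empty] at hco
        rw [hco] at hfr
        rw [AffineSubspace.span_empty, AffineSubspace.direction_bot, finrank_bot] at hfr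
        omega
      have hdir : (affineSpan ℝ (Tw w)).direction = ⊤ :=
        Submodule.eq_top_of_finrank_eq (by rw [hfr, finrank_euclideanSpace_fin])
      obtain ⟨t1, ht1⟩ := hTne
      have hspan : affineSpan ℝ (Tw w) = ⊤ :=
        (AffineSubspace.direction_eq_top_iff_of_nonempty
          ⟨t1, subset_affineSpan ℝ _ ht1⟩).mp hdir
      have hconvT : Convex ℝ (Tw w) := by
        intro s1 h1 s2 h2 a b ha hb hab
        rw [key1] at h1 h2 ⊢
        intro v
        have e1 : (inner ℝ (a • s1 + b • s2) v : ℝ)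
            = a * (inner ℝ s1 v : ℝ) + b * (inner ℝ s2 v : ℝ) := by
          rw [inner_add_left, real_inner_smul_left, real_inner_smul_left]
        have e2 : (inner ℝ (a • s1 + b • s2) w : ℝ)
            = a * (inner ℝ s1 w : ℝ) + b * (inner ℝ s2 w : ℝ) := by
          rw [inner_add_left, real_inner_smul_left, real_inner_smul_left]
        have hgw : g w = a * g w + b * g w := by rw [← add_mul, hab, one_mul]
        have hgv : g v = a * g v + b * g v := by rw [← add_mul, hab, one_mul]
        nlinarith [mul_le_mul_of_nonneg_left (h1 v) ha,
          mul_le_mul_of_nonneg_left (h2 v) hb]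
      obtain ⟨t₀, ht₀⟩ := (Convex.interior_nonempty_iff_affineSpan_eq_top hconvT).mpr hspan
      obtain ⟨ε, hε, hsub⟩ := Metric.isOpen_iff.mp isOpen_interior t₀ ht₀
      exact ⟨t₀, ε, hε, hsub.trans interior_subset⟩
  -- forward direction of the first iff
  have step1 : (∃ F : Set (V n × ℝ), NonVerticalFace (epi g) F ∧ {w} = Prod.fst '' F) →
      (w, g w) ∈ Set.extremePoints ℝ (epi g) := by
    rintro ⟨F, ⟨hexp, hne, hnv⟩, hproj⟩
    have hfst : ∀ p ∈ F, p.1 = w := by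
      intro p hp
      have : p.1 ∈ Prod.fst '' F := ⟨p, hp, rfl⟩
      rw [← hproj] at this
      exact this
    have hsame : ∀ p ∈ F, ∀ q ∈ F, p = q := by
      intro p hp q hq
      by_contra hne'
      have h1 : p.1 = q.1 := by rw [hfst p hp, hfst q hq]
      have h2 : p.2 ≠ q.2 := fun h => hne' (Prod.ext h1 h)
      have hvd : p - q ∈ (affineSpan ℝ F).direction := by
        have := AffineSubspace.vsub_mem_direction (subset_affineSpan ℝ F hp)
          (subset_affineSpan ℝ F hq)
        simpa using this
      apply hnv
      have hsm := Submodule.smul_mem _ (p.2 - q.2)⁻¹ hvd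
      have heq : (p.2 - q.2)⁻¹ • (p - q) = (((0 : V n), (1 : ℝ)) : V n × ℝ) := by
        have hne2 : p.2 - q.2 ≠ 0 := sub_ne_zero.mpr h2
        apply Prod.ext
        · simp [h1]
        · simp [inv_mul_cancel₀ hne2]
      rwa [heq] at hsm
    obtain ⟨p, hp⟩ := hne
    obtain ⟨l, hl⟩ := hexp ⟨p, hp⟩
    have hpF := hp
    rw [hl] at hpF
    have hpepi : p ∈ epi g := hpF.1
    have hpmax : ∀ y ∈ epi g, l y ≤ l p := hpF.2
    have hp1 : p.1 = w := hfst p hp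
    have hl01 : l (((0 : V n), (1 : ℝ)) : V n × ℝ) ≤ 0 := by
      have hup : (p + (((0 : V n), (1 : ℝ)) : V n × ℝ)) ∈ epi g := by
        have hpe : g p.1 ≤ p.2 := hpepi
        show g (p + ((0 : V n), (1 : ℝ))).1 ≤ (p + ((0 : V n), (1 : ℝ))).2
        simp only [Prod.fst_add, Prod.snd_add]
        simpa using by linarith [hpe]
      have := hpmax _ hup
      rw [map_add] at this
      linarith
    have hxF : ((w, g w) : V n × ℝ) ∈ F := by
      rw [hl]
      refine ⟨hgx, fun y hy => ?_⟩
      have h1 : l y ≤ l p := hpmax y hy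
      have h2 : l p ≤ l ((w, g w) : V n × ℝ) := by
        have hpe : p = ((w, g w) : V n × ℝ) + (p.2 - g w) • (((0 : V n), (1 : ℝ)) : V n × ℝ) := by
          apply Prod.ext
          · simp [hp1]
          · simp
        have hge : g w ≤ p.2 := by
          have h := hpepi
          simp only [epi, mem_setOf_eq] at h
          rwa [hp1] at h
        calc l p = l ((w, g w) : V n × ℝ)
              + (p.2 - g w) * l (((0 : V n), (1 : ℝ)) : V n × ℝ) := by
              conv_lhs => rw [hpe]
              rw [map_add, map_smul, smul_eq_mul]
          _ ≤ l ((w, g w) : V n × ℝ) := by nlinarith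
      linarith
    rw [mem_extremePoints]
    refine ⟨hgx, ?_⟩
    intro p1 hp1' p2 hp2' hseg
    have h1F := hexp.isExtreme.left_mem_of_mem_openSegment hp1' hp2' hxF hseg
    have h2F := hexp.isExtreme.right_mem_of_mem_openSegment hp1' hp2' hxF hseg
    exact ⟨hsame _ h1F _ hxF, hsame _ h2F _ hxF⟩
  -- backward direction of the first iff
  have step2 : (w, g w) ∈ Set.extremePoints ℝ (epi g) →
      ∃ F : Set (V n × ℝ), NonVerticalFace (epi g) F ∧ {w} = Prod.fst '' F := by
    intro hx
    obtain ⟨M, hmin, huniq⟩ := aux_extreme_unique_min L b hPb hx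
    refine ⟨{((w, g w) : V n × ℝ)}, ⟨?_, singleton_nonempty _, ?_⟩, ?_⟩
    · intro _
      refine ⟨LinearMap.toContinuousLinearMap (-M), ?_⟩
      ext z
      simp only [mem_singleton_iff, mem_setOf_eq, LinearMap.coe_toContinuousLinearMap',
        LinearMap.neg_apply, neg_le_neg_iff]
      constructor
      · rintro rfl
        exact ⟨hgx, fun y hy => hmin y hy⟩
      · rintro ⟨hz, hall⟩
        exact huniq z hz (le_antisymm (hall _ hgx) (hmin z hz))
    · rw [direction_affineSpan, vectorSpan_singleton]
      simp [Prod.ext_iff]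
    · ext v
      simp [eq_comm]
  refine ⟨⟨step1, step2⟩, ?_⟩
  constructor
  · intro hx
    obtain ⟨t₀, ε, hε, hsub⟩ := key3 hx
    exact span_of_ball t₀ ε hε hsub
  · intro hfr
    obtain ⟨t₀, ε, hε, hsub⟩ := ball_of_finrank hfr
    exact key2 t₀ ε hε hsub
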